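/- For density matrices ρ and σ (positive semidefinite with trace 1) and any s ∈ [0,1], ‖ρ^{1/2} σ^{1/2}‖₁² ≤ Tr(ρ^s σ^{1-s}). That is, the squared Uhlmann fidelity is bounded above by every Rényi overlap Q_s. -/

import Mathlib

open Matrix
open scoped ComplexOrder

/-- The positive semidefinite square root, as `Matrix.PosSemidef.sqrt` was defined in the older Mathlib. -/
noncomputable def Matrix.PosSemidef.sqrt {𝕜 : Type*} [RCLike 𝕜] {n : Type*} [Fintype n] [DecidableEq n]
    {A : Matrix n n 𝕜} (hA : A.PosSemidef) : Matrix n n 𝕜 :=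
  (hA.1.eigenvectorUnitary : Matrix n n 𝕜) * diagonal ((↑) ∘ (√·) ∘ hA.1.eigenvalues) *
    (star hA.1.eigenvectorUnitary : Matrix n n 𝕜)

/-- Trace norm `‖X‖₁ = Tr √(XᴴX)`. -/
noncomputable def traceNorm {n : Type*} [Fintype n] [DecidableEq n] (X : Matrix n n ℂ) : ℝ :=
  ((Matrix.posSemidef_conjTranspose_mul_self X).sqrt.trace).re

/-- Fractional power `A^s` of a positive semidefinite matrix, defined spectrally with the
convention `0 ^ s = 0` for all real `s`. -/
noncomputable def Matrix.PosSemidef.rpow {n : Type*} [Fintype n] [DecidableEq n]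
    {A : Matrix n n ℂ} (hA : A.PosSemidef) (s : ℝ) : Matrix n n ℂ :=
  hA.1.cfc (fun x => if x = 0 then 0 else x ^ s)

/-- Matrix logarithm of a positive semidefinite matrix, defined spectrally with the
convention `log 0 = 0` on the kernel. -/
noncomputable def Matrix.PosSemidef.log {n : Type*} [Fintype n] [DecidableEq n]
    {A : Matrix n n ℂ} (hA : A.PosSemidef) : Matrix n n ℂ :=
  hA.1.cfc Real.log



lemma rpow_half_sq {x : ℝ} (hx : 0 ≤ x) (a : ℝ) : (x ^ (a/2)) ^ 2 = x ^ a := by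
  rw [← Real.rpow_natCast (x ^ (a/2)) 2, ← Real.rpow_mul hx]
  norm_num

lemma sqrt_eq_rpow_split {x : ℝ} (hx : 0 < x) (a : ℝ) :
    Real.sqrt x = x ^ (a/2) * x ^ ((1-a)/2) := by
  rw [← Real.rpow_add hx, Real.sqrt_eq_rpow]
  congr 1
  ring

lemma rpow_rpow_inv {x : ℝ} (hx : 0 ≤ x) {a : ℝ} (ha : a ≠ 0) : (x ^ a) ^ (1/a) = x := by
  rw [← Real.rpow_mul hx, mul_one_div, div_self ha, Real.rpow_one]

lemma scalar_key {n : Type*} [Fintype n] [DecidableEq n] {s : ℝ} (hs0 : 0 ≤ s) (hs1 : s ≤ 1)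
    (p q : n → ℝ) (hp : ∀ i, 0 ≤ p i) (hq : ∀ j, 0 ≤ q j)
    (hp1 : ∑ i, p i = 1) (hq1 : ∑ j, q j = 1)
    (C B : Matrix n n ℂ)
    (hB1 : ∀ i, ∑ j, Complex.normSq (B j i) ≤ 1)
    (hB2 : ∀ j, ∑ i, Complex.normSq (B j i) ≤ 1) :
    (∑ i, ∑ j, Real.sqrt (p i) * Real.sqrt (q j) *
        (‖C i j‖ * ‖B j i‖)) ^ 2
      ≤ ∑ i, ∑ j, (if p i = 0 then 0 else p i ^ s) * (if q j = 0 then 0 else q j ^ (1-s)) *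
          Complex.normSq (C i j) := by
  classical
  set S : Finset (n × n) := Finset.univ.filter (fun ij => p ij.1 ≠ 0 ∧ q ij.2 ≠ 0) with hS
  have hmem : ∀ ij : n × n, ij ∈ S ↔ (p ij.1 ≠ 0 ∧ q ij.2 ≠ 0) := by
    intro ij; simp [hS]
  have hSsub : S ⊆ Finset.univ ×ˢ Finset.univ := by
    rw [Finset.univ_product_univ]; exact Finset.filter_subset _ _
  have hpS : ∀ ij ∈ S, 0 < p ij.1 := fun ij h =>
    lt_of_le_of_ne (hp _) (Ne.symm ((hmem ij).mp h).1)
  have hqS : ∀ ij ∈ S, 0 < q ij.2 := fun ij h =>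
    lt_of_le_of_ne (hq _) (Ne.symm ((hmem ij).mp h).2)
  set α : n × n → ℝ := fun ij =>
    p ij.1 ^ (s/2) * q ij.2 ^ ((1-s)/2) * ‖C ij.1 ij.2‖ with hα
  set β : n × n → ℝ := fun ij =>
    p ij.1 ^ ((1-s)/2) * q ij.2 ^ (s/2) * ‖B ij.2 ij.1‖ with hβ
  have hL : (∑ i, ∑ j, Real.sqrt (p i) * Real.sqrt (q j) *
      (‖C i j‖ * ‖B j i‖)) = ∑ ij ∈ S, α ij * β ij := by
    rw [← Finset.sum_product']
    rw [← Finset.sum_subset hSsub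
      (f := fun ij : n × n => Real.sqrt (p ij.1) * Real.sqrt (q ij.2) *
        (‖C ij.1 ij.2‖ * ‖B ij.2 ij.1‖))
      (by
        intro ij _ hij
        rw [hmem] at hij
        push_neg at hij
        by_cases h1 : p ij.1 = 0
        · simp [h1]
        · simp [hij h1])]
    refine Finset.sum_congr rfl fun ij hij => ?_
    rw [hα, hβ]
    dsimp only
    rw [sqrt_eq_rpow_split (hpS ij hij) s, sqrt_eq_rpow_split (hqS ij hij) s]
    ring
  have hA2 : ∑ ij ∈ S, α ij ^ 2
      = ∑ i, ∑ j, (if p i = 0 then 0 else p i ^ s) * (if q j = 0 then 0 else q j ^ (1-s)) *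
          Complex.normSq (C i j) := by
    rw [← Finset.sum_product']
    rw [← Finset.sum_subset hSsub
      (f := fun ij : n × n => (if p ij.1 = 0 then 0 else p ij.1 ^ s) *
        (if q ij.2 = 0 then 0 else q ij.2 ^ (1-s)) * Complex.normSq (C ij.1 ij.2))
      (by
        intro ij _ hij
        rw [hmem] at hij
        push_neg at hij
        by_cases h1 : p ij.1 = 0
        · simp [h1]
        · simp [hij h1])]
    refine Finset.sum_congr rfl fun ij hij => ?_
    rw [hα]
    dsimp only
    rw [if_neg ((hmem ij).mp hij).1, if_neg ((hmem ij).mp hij).2]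
    rw [mul_pow, mul_pow, rpow_half_sq (hp _), rpow_half_sq (hq _), Complex.sq_norm]
  have hsum1 : ∑ ij ∈ S, p ij.1 * Complex.normSq (B ij.2 ij.1) ≤ 1 := by
    calc ∑ ij ∈ S, p ij.1 * Complex.normSq (B ij.2 ij.1)
        ≤ ∑ ij ∈ Finset.univ ×ˢ Finset.univ, p ij.1 * Complex.normSq (B ij.2 ij.1) := by
          apply Finset.sum_le_sum_of_subset_of_nonneg hSsub
          intro ij _ _
          exact mul_nonneg (hp _) (Complex.normSq_nonneg _)
      _ = ∑ i, p i * ∑ j, Complex.normSq (B j i) := by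
          rw [Finset.sum_product]
          exact Finset.sum_congr rfl fun i _ => by rw [Finset.mul_sum]
      _ ≤ ∑ i, p i * 1 := Finset.sum_le_sum fun i _ =>
          mul_le_mul_of_nonneg_left (hB1 i) (hp i)
      _ = 1 := by simp [hp1]
  have hsum2 : ∑ ij ∈ S, q ij.2 * Complex.normSq (B ij.2 ij.1) ≤ 1 := by
    calc ∑ ij ∈ S, q ij.2 * Complex.normSq (B ij.2 ij.1)
        ≤ ∑ ij ∈ Finset.univ ×ˢ Finset.univ, q ij.2 * Complex.normSq (B ij.2 ij.1) := by
          apply Finset.sum_le_sum_of_subset_of_nonneg hSsub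
          intro ij _ _
          exact mul_nonneg (hq _) (Complex.normSq_nonneg _)
      _ = ∑ i, ∑ j, q j * Complex.normSq (B j i) := by rw [Finset.sum_product]
      _ = ∑ j, q j * ∑ i, Complex.normSq (B j i) := by
          rw [Finset.sum_comm]
          exact Finset.sum_congr rfl fun j _ => by rw [Finset.mul_sum]
      _ ≤ ∑ j, q j * 1 := Finset.sum_le_sum fun j _ =>
          mul_le_mul_of_nonneg_left (hB2 j) (hq j)
      _ = 1 := by simp [hq1]
  have hβ2 : ∀ ij ∈ S, β ij ^ 2
      = p ij.1 ^ (1-s) * q ij.2 ^ s * Complex.normSq (B ij.2 ij.1) := by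
    intro ij hij
    rw [hβ]
    dsimp only
    rw [mul_pow, mul_pow, rpow_half_sq (hp _), rpow_half_sq (hq _), Complex.sq_norm]
  have hβsum : ∑ ij ∈ S, β ij ^ 2 ≤ 1 := by
    rcases eq_or_lt_of_le hs0 with h0 | h0
    · calc ∑ ij ∈ S, β ij ^ 2 = ∑ ij ∈ S, p ij.1 * Complex.normSq (B ij.2 ij.1) := by
            refine Finset.sum_congr rfl fun ij hij => ?_
            rw [hβ2 ij hij, ← h0]
            norm_num
        _ ≤ 1 := hsum1
    rcases eq_or_lt_of_le hs1 with h1 | h1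
    · calc ∑ ij ∈ S, β ij ^ 2 = ∑ ij ∈ S, q ij.2 * Complex.normSq (B ij.2 ij.1) := by
            refine Finset.sum_congr rfl fun ij hij => ?_
            rw [hβ2 ij hij, h1]
            norm_num
        _ ≤ 1 := hsum2
    · have hs' : (0:ℝ) < 1 - s := by linarith
      have hconj : Real.HolderConjugate (1/(1-s)) (1/s) := by
        rw [Real.holderConjugate_iff]
        constructor
        · rw [lt_div_iff₀ hs']
          linarith
        · rw [one_div, one_div, inv_inv, inv_inv]
          ring
      have key := Real.inner_le_Lp_mul_Lq_of_nonneg (s := S)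
        (f := fun ij => (p ij.1 * Complex.normSq (B ij.2 ij.1)) ^ (1-s))
        (g := fun ij => (q ij.2 * Complex.normSq (B ij.2 ij.1)) ^ s)
        hconj
        (fun ij _ => Real.rpow_nonneg (mul_nonneg (hp _) (Complex.normSq_nonneg _)) _)
        (fun ij _ => Real.rpow_nonneg (mul_nonneg (hq _) (Complex.normSq_nonneg _)) _)
      have e1 : ∑ ij ∈ S, β ij ^ 2
          = ∑ ij ∈ S, ((p ij.1 * Complex.normSq (B ij.2 ij.1)) ^ (1-s)) *
              ((q ij.2 * Complex.normSq (B ij.2 ij.1)) ^ s) := by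
        refine Finset.sum_congr rfl fun ij hij => ?_
        have hc : (Complex.normSq (B ij.2 ij.1) : ℝ)
            = Complex.normSq (B ij.2 ij.1) ^ (1-s) * Complex.normSq (B ij.2 ij.1) ^ s := by
          rw [← Real.rpow_add' (Complex.normSq_nonneg _) (by norm_num : (1-s) + s ≠ 0),
            show (1-s) + s = (1:ℝ) by ring, Real.rpow_one]
        rw [hβ2 ij hij, Real.mul_rpow (hp _) (Complex.normSq_nonneg _),
          Real.mul_rpow (hq _) (Complex.normSq_nonneg _)]
        conv_lhs => rw [hc]
        ring
      have e2 : ∑ ij ∈ S, ((p ij.1 * Complex.normSq (B ij.2 ij.1)) ^ (1-s)) ^ (1/(1-s))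
          = ∑ ij ∈ S, p ij.1 * Complex.normSq (B ij.2 ij.1) :=
        Finset.sum_congr rfl fun ij _ =>
          rpow_rpow_inv (mul_nonneg (hp _) (Complex.normSq_nonneg _)) hs'.ne'
      have e3 : ∑ ij ∈ S, ((q ij.2 * Complex.normSq (B ij.2 ij.1)) ^ s) ^ (1/s)
          = ∑ ij ∈ S, q ij.2 * Complex.normSq (B ij.2 ij.1) :=
        Finset.sum_congr rfl fun ij _ =>
          rpow_rpow_inv (mul_nonneg (hq _) (Complex.normSq_nonneg _)) h0.ne'
      rw [e1]
      refine le_trans key ?_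
      rw [one_div_one_div, one_div_one_div, e2, e3]
      have n1 : (0:ℝ) ≤ ∑ ij ∈ S, p ij.1 * Complex.normSq (B ij.2 ij.1) :=
        Finset.sum_nonneg fun ij _ => mul_nonneg (hp _) (Complex.normSq_nonneg _)
      have n2 : (0:ℝ) ≤ ∑ ij ∈ S, q ij.2 * Complex.normSq (B ij.2 ij.1) :=
        Finset.sum_nonneg fun ij _ => mul_nonneg (hq _) (Complex.normSq_nonneg _)
      calc (∑ ij ∈ S, p ij.1 * Complex.normSq (B ij.2 ij.1)) ^ (1-s) *
            (∑ ij ∈ S, q ij.2 * Complex.normSq (B ij.2 ij.1)) ^ s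
          ≤ 1 * 1 := by
            apply mul_le_mul
            · exact Real.rpow_le_one n1 hsum1 hs'.le
            · exact Real.rpow_le_one n2 hsum2 h0.le
            · exact Real.rpow_nonneg n2 _
            · norm_num
        _ = 1 := by norm_num
  rw [hL]
  calc (∑ ij ∈ S, α ij * β ij) ^ 2
      ≤ (∑ ij ∈ S, α ij ^ 2) * (∑ ij ∈ S, β ij ^ 2) :=
        Finset.sum_mul_sq_le_sq_mul_sq S α β
    _ ≤ (∑ ij ∈ S, α ij ^ 2) * 1 :=
        mul_le_mul_of_nonneg_left hβsum (Finset.sum_nonneg fun ij _ => sq_nonneg _)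
    _ = _ := by rw [mul_one, hA2]

lemma psd_diag_re_nonneg {n : Type*} [Fintype n] [DecidableEq n] {N : Matrix n n ℂ}
    (h : N.PosSemidef) (i : n) : 0 ≤ (N i i).re := by
  have h0 := h.re_dotProduct_nonneg (Pi.single i 1)
  simpa [dotProduct, mulVec, Pi.single_apply] using h0

lemma trace_dcdb {n : Type*} [Fintype n] [DecidableEq n] (a b : n → ℝ) (C B : Matrix n n ℂ) :
    (Matrix.diagonal (fun i => (a i : ℂ)) * C * Matrix.diagonal (fun j => (b j : ℂ)) * B).trace
      = ∑ i, ∑ j, (a i : ℂ) * (b j : ℂ) * (C i j * B j i) := by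
  have hent : ∀ i j, (Matrix.diagonal (fun i => (a i : ℂ)) * C *
      Matrix.diagonal (fun j => (b j : ℂ))) i j = (a i : ℂ) * C i j * (b j : ℂ) := by
    intro i j; rw [Matrix.mul_diagonal, Matrix.diagonal_mul]
  simp only [Matrix.trace, Matrix.diag, Matrix.mul_apply, hent]
  exact Finset.sum_congr rfl fun i _ => Finset.sum_congr rfl fun j _ => by ring


/-- For density matrices `ρ`, `σ` and `s ∈ [0,1]`, the squared Uhlmann fidelity is bounded
above by the Rényi overlap: `‖ρ^{1/2} σ^{1/2}‖₁² ≤ Tr(ρ^s σ^{1-s})`. -/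
theorem stmt2 {n : Type*} [Fintype n] [DecidableEq n]
    {ρ σ : Matrix n n ℂ} (hρ : ρ.PosSemidef) (hσ : σ.PosSemidef)
    (hρ1 : ρ.trace = 1) (hσ1 : σ.trace = 1)
    {s : ℝ} (hs : s ∈ Set.Icc (0:ℝ) 1) :
    (traceNorm (hρ.sqrt * hσ.sqrt)) ^ 2 ≤ ((hρ.rpow s * hσ.rpow (1 - s)).trace).re := by

  obtain ⟨hs0, hs1⟩ := hs
  set U : Matrix n n ℂ := (hρ.1.eigenvectorUnitary : Matrix n n ℂ) with hUdef
  set V : Matrix n n ℂ := (hσ.1.eigenvectorUnitary : Matrix n n ℂ) with hVdef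
  set p : n → ℝ := hρ.1.eigenvalues with hpdef
  set q : n → ℝ := hσ.1.eigenvalues with hqdef
  have hUU : Uᴴ * U = 1 := mem_unitaryGroup_iff'.mp hρ.1.eigenvectorUnitary.2
  have hUU' : U * Uᴴ = 1 := mem_unitaryGroup_iff.mp hρ.1.eigenvectorUnitary.2
  have hVV : Vᴴ * V = 1 := mem_unitaryGroup_iff'.mp hσ.1.eigenvectorUnitary.2
  have hVV' : V * Vᴴ = 1 := mem_unitaryGroup_iff.mp hσ.1.eigenvectorUnitary.2
  have hp0 : ∀ i, 0 ≤ p i := hρ.eigenvalues_nonneg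
  have hq0 : ∀ j, 0 ≤ q j := hσ.eigenvalues_nonneg
  -- trace of ρ is sum of eigenvalues
  have hptr : ∑ i, p i = 1 := by
    have h1 : ρ.trace = ((∑ i, p i : ℝ) : ℂ) := by
      have : ρ = U * diagonal (fun i => ((p i : ℝ) : ℂ)) * Uᴴ := hρ.1.spectral_theorem
      rw [this, trace_mul_cycle, hUU, one_mul, trace_diagonal, Complex.ofReal_sum]
    rw [hρ1] at h1
    exact_mod_cast h1.symm
  have hqtr : ∑ j, q j = 1 := by
    have h1 : σ.trace = ((∑ j, q j : ℝ) : ℂ) := by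
      have : σ = V * diagonal (fun j => ((q j : ℝ) : ℂ)) * Vᴴ := hσ.1.spectral_theorem
      rw [this, trace_mul_cycle, hVV, one_mul, trace_diagonal, Complex.ofReal_sum]
    rw [hσ1] at h1
    exact_mod_cast h1.symm
  -- the product and its polar data
  set X : Matrix n n ℂ := hρ.sqrt * hσ.sqrt with hXdef
  set W : Matrix n n ℂ :=
    ((Matrix.posSemidef_conjTranspose_mul_self X).1.eigenvectorUnitary : Matrix n n ℂ) with hWdef
  set t : n → ℝ := (Matrix.posSemidef_conjTranspose_mul_self X).1.eigenvalues with htdef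
  have hWW : Wᴴ * W = 1 :=
    mem_unitaryGroup_iff'.mp (Matrix.posSemidef_conjTranspose_mul_self X).1.eigenvectorUnitary.2
  have hWW' : W * Wᴴ = 1 :=
    mem_unitaryGroup_iff.mp (Matrix.posSemidef_conjTranspose_mul_self X).1.eigenvectorUnitary.2
  have ht0 : ∀ k, 0 ≤ t k := (Matrix.posSemidef_conjTranspose_mul_self X).eigenvalues_nonneg
  have hMspec : Xᴴ * X = W * diagonal (fun k => ((t k : ℝ) : ℂ)) * Wᴴ :=
    (Matrix.posSemidef_conjTranspose_mul_self X).1.spectral_theorem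
  have hWMW : Wᴴ * (Xᴴ * X) * W = diagonal (fun k => ((t k : ℝ) : ℂ)) := by
    rw [hMspec]
    calc Wᴴ * (W * diagonal (fun k => ((t k : ℝ) : ℂ)) * Wᴴ) * W
        = (Wᴴ * W) * diagonal (fun k => ((t k : ℝ) : ℂ)) * (Wᴴ * W) := by
          simp only [mul_assoc]
      _ = _ := by rw [hWW, one_mul, mul_one]
  set g : n → ℝ := fun k => if t k = 0 then 0 else (Real.sqrt (t k))⁻¹ with hgdef
  set χ : n → ℝ := fun k => if t k = 0 then 0 else 1 with hχdef
  have hgtg : ∀ k, g k * t k * g k = χ k := by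
    intro k
    by_cases h : t k = 0
    · simp [hgdef, hχdef, h]
    · have htpos : 0 < t k := lt_of_le_of_ne (ht0 k) (Ne.symm h)
      have hsne : Real.sqrt (t k) ≠ 0 := by positivity
      simp only [hgdef, hχdef, if_neg h]
      field_simp
      rw [Real.sq_sqrt (ht0 k)]
  have hgt : ∀ k, g k * t k = Real.sqrt (t k) := by
    intro k
    by_cases h : t k = 0
    · simp [hgdef, h, Real.sqrt_eq_zero', le_of_eq h.symm]
    · have htpos : 0 < t k := lt_of_le_of_ne (ht0 k) (Ne.symm h)
      have hsne : Real.sqrt (t k) ≠ 0 := by positivity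
      simp only [hgdef, if_neg h]
      field_simp
      rw [Real.sq_sqrt (ht0 k)]
  have hgχ : ∀ k, g k * χ k = g k := by
    intro k
    by_cases h : t k = 0 <;> simp [hgdef, hχdef, h]
  set Y : Matrix n n ℂ := X * W * diagonal (fun k => ((g k : ℝ) : ℂ)) with hYdef
  set C : Matrix n n ℂ := Uᴴ * V with hCdef
  set B : Matrix n n ℂ := Vᴴ * W * Yᴴ * U with hBdef
  have hXfact : X = U * diagonal (fun i => ((Real.sqrt (p i) : ℝ) : ℂ)) * Uᴴ *
      (V * diagonal (fun j => ((Real.sqrt (q j) : ℝ) : ℂ)) * Vᴴ) := rfl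
  have hrpow1 : hρ.rpow s = U * diagonal (fun i =>
      (((if p i = 0 then 0 else p i ^ s : ℝ)) : ℂ)) * Uᴴ := rfl
  have hrpow2 : hσ.rpow (1-s) = V * diagonal (fun j =>
      (((if q j = 0 then 0 else q j ^ (1-s) : ℝ)) : ℂ)) * Vᴴ := rfl
  have htn : traceNorm X = ∑ k, Real.sqrt (t k) := by
    have hsqrtM : (Matrix.posSemidef_conjTranspose_mul_self X).sqrt
        = W * diagonal (fun k => ((Real.sqrt (t k) : ℝ) : ℂ)) * Wᴴ := rfl
    unfold traceNorm
    rw [hsqrtM, trace_mul_cycle, hWW, one_mul, trace_diagonal, ← Complex.ofReal_sum,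
      Complex.ofReal_re]
  clear_value B C Y χ g t W X q p V U
  have hdiagH : (diagonal (fun k => ((g k : ℝ) : ℂ)))ᴴ = diagonal (fun k => ((g k : ℝ) : ℂ)) := by
    rw [diagonal_conjTranspose]
    exact congrArg diagonal (funext fun k => by simp [Complex.conj_ofReal])
  have hYH : Yᴴ = diagonal (fun k => ((g k : ℝ) : ℂ)) * Wᴴ * Xᴴ := by
    rw [hYdef, conjTranspose_mul, conjTranspose_mul, hdiagH]
    simp only [mul_assoc]
  have hYY : Yᴴ * Y = diagonal (fun k => ((χ k : ℝ) : ℂ)) := by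
    rw [hYH, hYdef]
    calc diagonal (fun k => ((g k : ℝ) : ℂ)) * Wᴴ * Xᴴ *
          (X * W * diagonal (fun k => ((g k : ℝ) : ℂ)))
        = diagonal (fun k => ((g k : ℝ) : ℂ)) * (Wᴴ * (Xᴴ * X) * W) *
            diagonal (fun k => ((g k : ℝ) : ℂ)) := by simp only [mul_assoc]
      _ = diagonal (fun k => ((g k : ℝ) : ℂ)) * diagonal (fun k => ((t k : ℝ) : ℂ)) *
            diagonal (fun k => ((g k : ℝ) : ℂ)) := by rw [hWMW]
      _ = _ := by
          rw [diagonal_mul_diagonal, diagonal_mul_diagonal]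
          refine congrArg diagonal (funext fun k => ?_)
          norm_cast
          exact hgtg k
  have hYXW : Yᴴ * X * W = diagonal (fun k => ((Real.sqrt (t k) : ℝ) : ℂ)) := by
    rw [hYH]
    calc diagonal (fun k => ((g k : ℝ) : ℂ)) * Wᴴ * Xᴴ * X * W
        = diagonal (fun k => ((g k : ℝ) : ℂ)) * (Wᴴ * (Xᴴ * X) * W) := by
          simp only [mul_assoc]
      _ = diagonal (fun k => ((g k : ℝ) : ℂ)) * diagonal (fun k => ((t k : ℝ) : ℂ)) := by
          rw [hWMW]
      _ = _ := by
          rw [diagonal_mul_diagonal]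
          refine congrArg diagonal (funext fun k => ?_)
          norm_cast
          exact hgt k
  -- trace representation via B
  have htrB : (Yᴴ * X * W).trace
      = (diagonal (fun i => ((Real.sqrt (p i) : ℝ) : ℂ)) * C *
          diagonal (fun j => ((Real.sqrt (q j) : ℝ) : ℂ)) * B).trace := by
    have e : Yᴴ * X * W = (Yᴴ * U) * (diagonal (fun i => ((Real.sqrt (p i) : ℝ) : ℂ)) * Uᴴ *
        (V * diagonal (fun j => ((Real.sqrt (q j) : ℝ) : ℂ)) * Vᴴ) * W) := by
      conv_lhs => rw [hXfact]
      simp only [mul_assoc]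
    rw [e, trace_mul_comm]
    congr 1
    rw [hCdef, hBdef]
    simp only [mul_assoc]
  have htr2 : (Yᴴ * X * W).trace = ((∑ k, Real.sqrt (t k) : ℝ) : ℂ) := by
    rw [hYXW, trace_diagonal, Complex.ofReal_sum]
  have hrep : traceNorm X = (∑ i, ∑ j, ((Real.sqrt (p i) : ℝ) : ℂ) *
      ((Real.sqrt (q j) : ℝ) : ℂ) * (C i j * B j i)).re := by
    rw [htn, ← trace_dcdb, ← htrB, htr2, Complex.ofReal_re]
  -- bounds on B
  have hBH : Bᴴ = Uᴴ * Y * Wᴴ * V := by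
    rw [hBdef]
    simp only [conjTranspose_mul, conjTranspose_conjTranspose, mul_assoc]
  have hBBH : B * Bᴴ = Vᴴ * W * diagonal (fun k => ((χ k : ℝ) : ℂ)) * (Wᴴ * V) := by
    calc B * Bᴴ = Vᴴ * W * (Yᴴ * ((U * Uᴴ) * (Y * (Wᴴ * V)))) := by
          rw [hBH, hBdef]; simp only [mul_assoc]
      _ = Vᴴ * W * ((Yᴴ * Y) * (Wᴴ * V)) := by rw [hUU', one_mul]; simp only [mul_assoc]
      _ = _ := by rw [hYY]; simp only [mul_assoc]
  have hchi_psd : (1 - diagonal (fun k => ((χ k : ℝ) : ℂ))).PosSemidef := by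
    have e : (1 : Matrix n n ℂ) - diagonal (fun k => ((χ k : ℝ) : ℂ))
        = diagonal (fun k => ((1 - χ k : ℝ) : ℂ)) := by
      rw [← diagonal_one, diagonal_sub]
      exact congrArg diagonal (funext fun k => by push_cast; ring)
    rw [e]
    refine posSemidef_diagonal_iff.mpr fun k => ?_
    rw [Complex.zero_le_real]
    by_cases h : t k = 0 <;> simp [hχdef, h]
  have hBBH_psd : (1 - B * Bᴴ).PosSemidef := by
    have e2 : (Vᴴ * W) * (1 - diagonal (fun k => ((χ k : ℝ) : ℂ))) * (Vᴴ * W)ᴴ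
        = 1 - B * Bᴴ := by
      have hVWWV : Vᴴ * W * (Wᴴ * V) = 1 := by
        calc Vᴴ * W * (Wᴴ * V) = Vᴴ * ((W * Wᴴ) * V) := by simp only [mul_assoc]
          _ = 1 := by rw [hWW', one_mul, hVV]
      rw [conjTranspose_mul, conjTranspose_conjTranspose, mul_sub, mul_one, sub_mul, hBBH,
        hVWWV]
    exact e2 ▸ hchi_psd.mul_mul_conjTranspose_same (Vᴴ * W)
  have hYchi : Y * diagonal (fun k => ((χ k : ℝ) : ℂ)) = Y := by
    rw [hYdef, mul_assoc (X * W), diagonal_mul_diagonal]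
    congr 1
    exact congrArg diagonal (funext fun k => by norm_cast; exact hgχ k)
  have hYYH_idem : (Y * Yᴴ) * (Y * Yᴴ) = Y * Yᴴ := by
    calc (Y * Yᴴ) * (Y * Yᴴ) = Y * ((Yᴴ * Y) * Yᴴ) := by simp only [mul_assoc]
      _ = Y * (diagonal (fun k => ((χ k : ℝ) : ℂ)) * Yᴴ) := by rw [hYY]
      _ = (Y * diagonal (fun k => ((χ k : ℝ) : ℂ))) * Yᴴ := by simp only [mul_assoc]
      _ = Y * Yᴴ := by rw [hYchi]
  have hYYH_herm : (Y * Yᴴ)ᴴ = Y * Yᴴ := by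
    rw [conjTranspose_mul, conjTranspose_conjTranspose]
  have hYYH_psd : (1 - Y * Yᴴ).PosSemidef := by
    have e : (1 - Y * Yᴴ)ᴴ * (1 - Y * Yᴴ) = 1 - Y * Yᴴ := by
      rw [conjTranspose_sub, conjTranspose_one, hYYH_herm, sub_mul, mul_sub, mul_sub,
        mul_one, one_mul, hYYH_idem]
      simp only [mul_one]
      abel
    exact e ▸ Matrix.posSemidef_conjTranspose_mul_self (1 - Y * Yᴴ)
  have hBHB : Bᴴ * B = Uᴴ * (Y * Yᴴ) * U := by
    calc Bᴴ * B = Uᴴ * Y * Wᴴ * ((V * Vᴴ) * (W * (Yᴴ * U))) := by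
          rw [hBH, hBdef]; simp only [mul_assoc]
      _ = Uᴴ * Y * ((Wᴴ * W) * (Yᴴ * U)) := by rw [hVV', one_mul]; simp only [mul_assoc]
      _ = _ := by rw [hWW, one_mul]; simp only [mul_assoc]
  have hBHB_psd : (1 - Bᴴ * B).PosSemidef := by
    have e2 : Uᴴ * (1 - Y * Yᴴ) * (Uᴴ)ᴴ = 1 - Bᴴ * B := by
      rw [conjTranspose_conjTranspose, mul_sub, mul_one, sub_mul, hBHB, hUU]
    exact e2 ▸ hYYH_psd.mul_mul_conjTranspose_same Uᴴ
  have hB1 : ∀ i, ∑ j, Complex.normSq (B j i) ≤ 1 := by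
    intro i
    have hd := psd_diag_re_nonneg hBHB_psd i
    have he : (Bᴴ * B) i i = ((∑ j, Complex.normSq (B j i) : ℝ) : ℂ) := by
      rw [mul_apply, Complex.ofReal_sum]
      refine Finset.sum_congr rfl fun j _ => ?_
      rw [conjTranspose_apply, Complex.star_def, mul_comm, Complex.mul_conj]
    rw [Matrix.sub_apply, one_apply_eq, he, Complex.sub_re, Complex.one_re, Complex.ofReal_re] at hd
    linarith
  have hB2 : ∀ j, ∑ i, Complex.normSq (B j i) ≤ 1 := by
    intro j
    have hd := psd_diag_re_nonneg hBBH_psd j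
    have he : (B * Bᴴ) j j = ((∑ i, Complex.normSq (B j i) : ℝ) : ℂ) := by
      rw [mul_apply, Complex.ofReal_sum]
      refine Finset.sum_congr rfl fun i _ => ?_
      rw [conjTranspose_apply, Complex.star_def, Complex.mul_conj]
    rw [Matrix.sub_apply, one_apply_eq, he, Complex.sub_re, Complex.one_re, Complex.ofReal_re] at hd
    linarith
  -- the Rényi overlap
  have hrhs : ((hρ.rpow s * hσ.rpow (1 - s)).trace).re
      = ∑ i, ∑ j, (if p i = 0 then 0 else p i ^ s) * (if q j = 0 then 0 else q j ^ (1-s)) *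
          Complex.normSq (C i j) := by
    have e : hρ.rpow s * hσ.rpow (1-s) = U * (diagonal (fun i =>
        (((if p i = 0 then 0 else p i ^ s : ℝ)) : ℂ)) * Uᴴ * (V * (diagonal (fun j =>
        (((if q j = 0 then 0 else q j ^ (1-s) : ℝ)) : ℂ)) * Vᴴ))) := by
      rw [hrpow1, hrpow2]; simp only [mul_assoc]
    rw [e, trace_mul_comm]
    have e2 : diagonal (fun i => (((if p i = 0 then 0 else p i ^ s : ℝ)) : ℂ)) * Uᴴ *
        (V * (diagonal (fun j => (((if q j = 0 then 0 else q j ^ (1-s) : ℝ)) : ℂ)) * Vᴴ)) * U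
        = diagonal (fun i => (((if p i = 0 then 0 else p i ^ s : ℝ)) : ℂ)) * C *
          diagonal (fun j => (((if q j = 0 then 0 else q j ^ (1-s) : ℝ)) : ℂ)) * Cᴴ := by
      rw [hCdef]
      simp only [conjTranspose_mul, conjTranspose_conjTranspose, mul_assoc]
    rw [e2, trace_dcdb]
    have e3 : ∀ (i j : n), ((if p i = 0 then 0 else p i ^ s : ℝ) : ℂ) *
        ((if q j = 0 then 0 else q j ^ (1-s) : ℝ) : ℂ) * (C i j * Cᴴ j i)
        = (((if p i = 0 then 0 else p i ^ s) * (if q j = 0 then 0 else q j ^ (1-s)) *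
            Complex.normSq (C i j) : ℝ) : ℂ) := by
      intro i j
      rw [conjTranspose_apply, Complex.star_def, Complex.mul_conj]
      push_cast
      ring
    simp only [e3]
    norm_cast
  -- assemble
  have hQ := scalar_key hs0 hs1 p q hp0 hq0 hptr hqtr C B hB1 hB2
  have hFle : traceNorm X ≤ ∑ i, ∑ j, Real.sqrt (p i) * Real.sqrt (q j) *
      (‖C i j‖ * ‖B j i‖) := by
    rw [hrep, Complex.re_sum]
    refine Finset.sum_le_sum fun i _ => ?_
    rw [Complex.re_sum]
    refine Finset.sum_le_sum fun j _ => ?_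
    refine le_trans (Complex.re_le_norm _) (le_of_eq ?_)
    rw [norm_mul, norm_mul, norm_mul, Complex.norm_real, Complex.norm_real,
      Real.norm_of_nonneg (Real.sqrt_nonneg _), Real.norm_of_nonneg (Real.sqrt_nonneg _)]
  have hF0 : 0 ≤ traceNorm X := by
    rw [htn]; exact Finset.sum_nonneg fun k _ => Real.sqrt_nonneg _
  rw [hrhs]
  exact le_trans (pow_le_pow_left₀ hF0 hFle 2) hQ
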